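/- (Velocity integral with a grazing singularity) Let n ∈ ℝ³ be a unit vector, 0 ≤ κ ≤ 1, c > 0, and 0 < a < 1. Then sup_{v ∈ ℝ³} ∫_{ℝ³} |v − u|^{κ−2} e^{−c|v−u|²} |u·n|^{−a} du < ∞. In particular, for 0 < β < (p−1)/p and 1 < p < ∞, the integral ∫_{ℝ³} e^{−c|v−u|²} |v−u|^{κ−2} |u·n|^{−βp/(p−1)} du is finite uniformly in v. -/

import Mathlib

open MeasureTheory Real Set
open scoped RealInnerProductSpace ENNReal

noncomputable section

abbrev E3 := EuclideanSpace ℝ (Fin 3)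

lemma lemA {m b : ℝ} (hm1 : m < 1) (hb : 0 < b) :
    Integrable (fun t : ℝ => |t| ^ (-m) * Real.exp (-b * t ^ 2)) := by
  have base : IntegrableOn (fun t : ℝ => |t| ^ (-m) * Real.exp (-b * t ^ 2)) (Ioi 0) := by
    refine (integrableOn_rpow_mul_exp_neg_mul_sq hb (by linarith : (-1:ℝ) < -m)).congr_fun
      (fun x hx => ?_) measurableSet_Ioi
    rw [abs_of_pos hx]
  rw [← integrableOn_univ, ← @Iio_union_Ici _ _ (0 : ℝ), integrableOn_union,
    integrableOn_Ici_iff_integrableOn_Ioi]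
  refine ⟨?_, base⟩
  rw [← (Measure.measurePreserving_neg (volume : Measure ℝ)).integrableOn_comp_preimage
      (Homeomorph.neg ℝ).measurableEmbedding]
  simp only [Function.comp_def, abs_neg, neg_sq, neg_preimage, neg_Iio, neg_neg, neg_zero]
  exact base

lemma twoSing {s a : ℝ} (hs : 0 < s) (ha : 0 ≤ a) (u w : ℝ) (hu : 0 ≤ u) (hw : 0 ≤ w) :
    u ^ (-s) * w ^ (-a) ≤ u ^ (-(s + a)) + w ^ (-(s + a)) := by
  rcases eq_or_lt_of_le hu with hu0 | hu0
  · rw [← hu0, Real.zero_rpow (neg_ne_zero.mpr hs.ne'), zero_mul]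
    exact add_nonneg (Real.rpow_nonneg le_rfl _) (Real.rpow_nonneg hw _)
  rcases eq_or_lt_of_le hw with hw0 | hw0
  · rcases eq_or_lt_of_le ha with ha0 | ha0
    · rw [← ha0, neg_zero, Real.rpow_zero, mul_one, add_zero]
      exact le_add_of_le_of_nonneg le_rfl (Real.rpow_nonneg hw _)
    · rw [← hw0, Real.zero_rpow (neg_ne_zero.mpr ha0.ne'), mul_zero]
      exact add_nonneg (Real.rpow_nonneg hu _) (Real.rpow_nonneg le_rfl _)
  rcases le_total u w with h | h
  · calc u ^ (-s) * w ^ (-a)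
        ≤ u ^ (-s) * u ^ (-a) :=
          mul_le_mul_of_nonneg_left (Real.rpow_le_rpow_of_nonpos hu0 h (by linarith))
            (Real.rpow_nonneg hu _)
      _ = u ^ (-(s + a)) := by rw [← Real.rpow_add hu0]; ring_nf
      _ ≤ _ := le_add_of_le_of_nonneg le_rfl (Real.rpow_nonneg hw _)
  · calc u ^ (-s) * w ^ (-a)
        ≤ w ^ (-s) * w ^ (-a) :=
          mul_le_mul_of_nonneg_right (Real.rpow_le_rpow_of_nonpos hw0 h (by linarith))
            (Real.rpow_nonneg hw _)
      _ = w ^ (-(s + a)) := by rw [← Real.rpow_add hw0]; ring_nf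
      _ ≤ _ := le_add_of_nonneg_of_le (Real.rpow_nonneg hu _) le_rfl

lemma lemB {s a b : ℝ} (hs : 0 < s) (ha : 0 ≤ a) (hsa : s + a < 1) (hb : 0 < b) :
    ∃ C : ℝ, 0 ≤ C ∧ ∀ x : ℝ,
      Integrable (fun t => |x - t| ^ (-s) * Real.exp (-b * (x - t) ^ 2) * |t| ^ (-a)) ∧
      ∫ t, |x - t| ^ (-s) * Real.exp (-b * (x - t) ^ 2) * |t| ^ (-a) ≤ C := by
  have hRnn : ∀ (x e : ℝ), (0:ℝ) ≤ |x| ^ e := fun x e => Real.rpow_nonneg (abs_nonneg x) e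
  set F1 : ℝ → ℝ := fun z => |z| ^ (-(s + a)) * Real.exp (-b * z ^ 2) with hF1
  set F3 : ℝ → ℝ := fun z => Real.exp (-b * z ^ 2) with hF3
  set ind : ℝ → ℝ := (Icc (-1 : ℝ) 1).indicator (fun t => |t| ^ (-(s + a))) with hind
  have hF1int : Integrable F1 := lemA (by linarith) hb
  have hF3int : Integrable F3 := integrable_exp_neg_mul_sq hb
  have hindint : Integrable ind := by
    refine (IntegrableOn.integrable_indicator ?_ measurableSet_Icc)
    refine Integrable.mono' ((hF1int.const_mul (Real.exp b)).integrableOn) ?_ ?_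
    · exact (by fun_prop : Measurable (fun t : ℝ => |t| ^ (-(s+a)))).aestronglyMeasurable
    · filter_upwards [ae_restrict_mem measurableSet_Icc] with t ht
      rw [Real.norm_eq_abs, abs_of_nonneg (hRnn _ _)]
      have h1 : Real.exp b * F1 t = |t| ^ (-(s+a)) * Real.exp (b + -b * t ^ 2) := by
        rw [hF1, Real.exp_add]; ring
      rw [h1]
      nth_rewrite 1 [show |t| ^ (-(s+a)) = |t| ^ (-(s+a)) * 1 by ring]
      apply mul_le_mul_of_nonneg_left _ (hRnn _ _)
      rw [← Real.exp_zero]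
      apply Real.exp_le_exp.mpr
      have ht2 : t ^ 2 ≤ 1 := by nlinarith [ht.1, ht.2]
      nlinarith [hb.le]
  -- the dominating function for parameter x
  have key : ∀ x t : ℝ, |x - t| ^ (-s) * Real.exp (-b * (x - t) ^ 2) * |t| ^ (-a)
      ≤ F1 (x - t) + (ind t + F3 (x - t)) := by
    intro x t
    have he1 : Real.exp (-b * (x - t) ^ 2) ≤ 1 := by
      rw [← Real.exp_zero]; apply Real.exp_le_exp.mpr; nlinarith [sq_nonneg (x - t)]
    have he0 : 0 < Real.exp (-b * (x - t) ^ 2) := Real.exp_pos _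
    have h2 : |x - t| ^ (-s) * Real.exp (-b * (x - t) ^ 2) * |t| ^ (-a)
        ≤ (|x - t| ^ (-(s + a)) + |t| ^ (-(s + a))) * Real.exp (-b * (x - t) ^ 2) := by
      have := twoSing hs ha |x - t| |t| (abs_nonneg _) (abs_nonneg _)
      calc |x - t| ^ (-s) * Real.exp (-b * (x - t) ^ 2) * |t| ^ (-a)
          = (|x - t| ^ (-s) * |t| ^ (-a)) * Real.exp (-b * (x - t) ^ 2) := by ring
        _ ≤ _ := mul_le_mul_of_nonneg_right this he0.le
    refine h2.trans ?_
    rw [add_mul]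
    apply add_le_add
    · exact le_rfl
    · rcases le_or_gt |t| 1 with h | h
      · apply le_add_of_le_of_nonneg _ he0.le
        calc |t| ^ (-(s+a)) * Real.exp (-b * (x - t) ^ 2) ≤ |t| ^ (-(s+a)) * 1 :=
              mul_le_mul_of_nonneg_left he1 (hRnn _ _)
          _ = |t| ^ (-(s+a)) := by ring
          _ = ind t := by
              rw [hind, indicator_of_mem]
              exact abs_le.mp h |>.imp id id |> fun ⟨h1', h2'⟩ => ⟨h1', h2'⟩
      · apply le_add_of_nonneg_of_le (indicator_nonneg (fun y _ => hRnn _ _) t)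
        calc |t| ^ (-(s+a)) * Real.exp (-b * (x - t) ^ 2)
            ≤ 1 * Real.exp (-b * (x - t) ^ 2) := by
              apply mul_le_mul_of_nonneg_right _ he0.le
              exact Real.rpow_le_one_of_one_le_of_nonpos h.le (by linarith)
          _ = F3 (x - t) := by rw [hF3]; ring
    -- done key
  have hmeas : ∀ x : ℝ, Measurable
      (fun t => |x - t| ^ (-s) * Real.exp (-b * (x - t) ^ 2) * |t| ^ (-a)) := by
    intro x; fun_prop
  have hdomint : ∀ x : ℝ, Integrable (fun t => F1 (x - t) + (ind t + F3 (x - t))) := by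
    intro x
    exact ((hF1int.comp_sub_left x).add (hindint.add (hF3int.comp_sub_left x)))
  refine ⟨(∫ z, F1 z) + ((∫ t, ind t) + (∫ z, F3 z)), ?_, fun x => ?_⟩
  · have : ∀ t, 0 ≤ ind t := indicator_nonneg (fun y _ => hRnn _ _)
    have i1 : 0 ≤ ∫ z, F1 z := integral_nonneg (fun z => by positivity)
    have i2 : 0 ≤ ∫ t, ind t := integral_nonneg this
    have i3 : 0 ≤ ∫ z, F3 z := integral_nonneg (fun z => (Real.exp_pos _).le)
    linarith
  have hint : Integrable (fun t => |x - t| ^ (-s) * Real.exp (-b * (x - t) ^ 2) * |t| ^ (-a)) := by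
    refine Integrable.mono' (hdomint x) ((hmeas x).aestronglyMeasurable) ?_
    refine ae_of_all _ fun t => ?_
    rw [Real.norm_eq_abs, abs_of_nonneg (by positivity)]
    exact key x t
  refine ⟨hint, ?_⟩
  calc ∫ t, |x - t| ^ (-s) * Real.exp (-b * (x - t) ^ 2) * |t| ^ (-a)
      ≤ ∫ t, (F1 (x - t) + (ind t + F3 (x - t))) := integral_mono hint (hdomint x) (key x)
    _ = (∫ t, F1 (x - t)) + (∫ t, (ind t + F3 (x - t))) :=
        integral_add (hF1int.comp_sub_left x) (hindint.add (hF3int.comp_sub_left x))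
    _ = (∫ t, F1 (x - t)) + ((∫ t, ind t) + (∫ t, F3 (x - t))) := by
        rw [integral_add hindint (hF3int.comp_sub_left x)]
    _ = (∫ z, F1 z) + ((∫ t, ind t) + (∫ z, F3 z)) := by
        rw [integral_sub_left_eq_self F1 volume x, integral_sub_left_eq_self F3 volume x]

lemma aux1 {κ c r : ℝ} (hκ0 : 0 ≤ κ) (hκ1 : κ ≤ 1) (hc : 0 < c) (hr : 0 ≤ r) :
    r ^ κ * Real.exp (-(c / 2) * r ^ 2) ≤ 2 + 2 / c := by
  set E := Real.exp (-(c / 2) * r ^ 2) with hE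
  have he1 : E ≤ 1 := by
    rw [hE, ← Real.exp_zero]; apply Real.exp_le_exp.mpr; nlinarith [sq_nonneg r]
  have he0 : 0 < E := Real.exp_pos _
  have hzE : (c / 2 * r ^ 2) * E ≤ 1 := by
    have h := Real.add_one_le_exp (c / 2 * r ^ 2)
    have hEinv : E = (Real.exp (c / 2 * r ^ 2))⁻¹ := by
      rw [hE, ← Real.exp_neg]; ring_nf
    rw [hEinv]
    rw [mul_inv_le_iff₀ (Real.exp_pos _), one_mul]
    nlinarith [Real.exp_pos (c / 2 * r ^ 2)]
  have hr2E : r ^ 2 * E ≤ 2 / c := by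
    rw [le_div_iff₀ hc]
    nlinarith
  have h1 : r ^ κ ≤ 1 + r := by
    rcases le_total r 1 with h | h
    · have := Real.rpow_le_one hr h hκ0
      linarith
    · have h2 : r ^ κ ≤ r ^ (1 : ℝ) := Real.rpow_le_rpow_of_exponent_le h hκ1
      rw [Real.rpow_one] at h2
      linarith
  have h2 : r * E ≤ 1 + 2 / c := by
    rcases le_total r 1 with h | h
    · have : r * E ≤ 1 * 1 := mul_le_mul h he1 he0.le one_pos.le
      have : (0:ℝ) < 2 / c := by positivity
      linarith
    · have hrr : r ≤ r ^ 2 := by nlinarith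
      have : r * E ≤ r ^ 2 * E := mul_le_mul_of_nonneg_right hrr he0.le
      have h3 : (0:ℝ) ≤ 2 / c := by positivity
      linarith
  calc r ^ κ * E ≤ (1 + r) * E := mul_le_mul_of_nonneg_right h1 he0.le
    _ = E + r * E := by ring
    _ ≤ 1 + (1 + 2 / c) := add_le_add he1 h2
    _ = 2 + 2 / c := by ring

lemma pointwise3 {κ c s r d0 d1 d2 : ℝ} (hκ0 : 0 ≤ κ) (hκ1 : κ ≤ 1) (hc : 0 < c)
    (hs : 0 < s) (hs2 : s < 2) (hr0 : 0 ≤ r) (hr : r ^ 2 = d0 ^ 2 + d1 ^ 2 + d2 ^ 2)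
    (h0 : d0 ≠ 0) (h1 : d1 ≠ 0) (h2 : d2 ≠ 0) :
    r ^ (κ - 2) * Real.exp (-c * r ^ 2) ≤
      (2 + 2 / c) * ((|d0| ^ (-s) * Real.exp (-(c / 2) * d0 ^ 2)) *
        ((|d1| ^ (-(1 - s / 2)) * Real.exp (-(c / 2) * d1 ^ 2)) *
         (|d2| ^ (-(1 - s / 2)) * Real.exp (-(c / 2) * d2 ^ 2)))) := by
  set q : ℝ := 1 - s / 2 with hq
  have hq0 : 0 < q := by rw [hq]; linarith
  have hrpos : 0 < r := by
    rcases hr0.eq_or_lt with h | h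
    · exfalso; apply h0
      have : d0 ^ 2 + d1 ^ 2 + d2 ^ 2 = 0 := by rw [← hr, ← h]; ring
      nlinarith [sq_nonneg d0, sq_nonneg d1, sq_nonneg d2, sq_nonneg (d0*d1)]
    · exact h
  have habs : ∀ d : ℝ, d ^ 2 ≤ r ^ 2 → |d| ≤ r := fun d hd => by
    rw [← Real.sqrt_sq hr0, ← Real.sqrt_sq_eq_abs]
    exact Real.sqrt_le_sqrt hd
  have hd0r : |d0| ≤ r := habs d0 (by nlinarith [sq_nonneg d1, sq_nonneg d2])
  have hd1r : |d1| ≤ r := habs d1 (by nlinarith [sq_nonneg d0, sq_nonneg d2])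
  have hd2r : |d2| ≤ r := habs d2 (by nlinarith [sq_nonneg d0, sq_nonneg d1])
  -- decompose the power
  have hsplit : r ^ (κ - 2) = r ^ κ * (r ^ (-s) * (r ^ (-q) * r ^ (-q))) := by
    rw [← Real.rpow_add hrpos, ← Real.rpow_add hrpos, ← Real.rpow_add hrpos]
    congr 1
    rw [hq]; ring
  -- decompose the exponential
  have hexp : Real.exp (-c * r ^ 2) = Real.exp (-(c / 2) * r ^ 2) *
      (Real.exp (-(c / 2) * d0 ^ 2) *
        (Real.exp (-(c / 2) * d1 ^ 2) * Real.exp (-(c / 2) * d2 ^ 2))) := by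
    rw [← Real.exp_add, ← Real.exp_add, ← Real.exp_add]
    congr 1
    rw [show -c * r ^ 2 = -(c/2) * r ^ 2 + -(c/2) * r ^ 2 by ring]
    rw [hr]; ring
  have hmono : ∀ d e : ℝ, d ≠ 0 → |d| ≤ r → 0 < e → r ^ (-e) ≤ |d| ^ (-e) := by
    intro d e hd hdr he
    exact Real.rpow_le_rpow_of_nonpos (abs_pos.mpr hd) hdr (by linarith)
  calc r ^ (κ - 2) * Real.exp (-c * r ^ 2)
      = (r ^ κ * Real.exp (-(c / 2) * r ^ 2)) *
        ((r ^ (-s) * Real.exp (-(c / 2) * d0 ^ 2)) *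
          ((r ^ (-q) * Real.exp (-(c / 2) * d1 ^ 2)) *
           (r ^ (-q) * Real.exp (-(c / 2) * d2 ^ 2)))) := by
        rw [hsplit, hexp]; ring
    _ ≤ (2 + 2 / c) * ((|d0| ^ (-s) * Real.exp (-(c / 2) * d0 ^ 2)) *
          ((|d1| ^ (-q) * Real.exp (-(c / 2) * d1 ^ 2)) *
           (|d2| ^ (-q) * Real.exp (-(c / 2) * d2 ^ 2)))) := by
        apply mul_le_mul (aux1 hκ0 hκ1 hc hr0)
        · apply mul_le_mul
          · exact mul_le_mul_of_nonneg_right (hmono d0 s h0 hd0r hs) (Real.exp_pos _).le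
          · apply mul_le_mul
            · exact mul_le_mul_of_nonneg_right (hmono d1 q h1 hd1r hq0) (Real.exp_pos _).le
            · exact mul_le_mul_of_nonneg_right (hmono d2 q h2 hd2r hq0) (Real.exp_pos _).le
            · positivity
            · positivity
          · positivity
          · positivity
        · positivity
        · positivity

lemma nullslab (i : Fin 3) (cc : ℝ) : (volume : Measure (Fin 3 → ℝ)) {x | x i = cc} = 0 := by
  have hset : {x : Fin 3 → ℝ | x i = cc}
      = Set.pi Set.univ (fun j => if j = i then {cc} else Set.univ) := by
    ext x
    simp only [Set.mem_setOf_eq, Set.mem_pi, Set.mem_univ, true_implies]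
    constructor
    · intro h j
      by_cases hj : j = i
      · subst hj; simp [h]
      · simp [hj]
    · intro h
      have := h i
      simpa using this
  rw [hset, volume_pi_pi]
  exact Finset.prod_eq_zero (Finset.mem_univ i) (by simp)

lemma keyLemma (κ c : ℝ) (hκ0 : 0 ≤ κ) (hκ1 : κ ≤ 1) (hc : 0 < c)
    (n : E3) (hn : ‖n‖ = 1) (a : ℝ) (ha : 0 < a) (ha1 : a < 1) :
    ∃ C : ℝ≥0∞, C < ⊤ ∧ ∀ v : E3,
      (∫⁻ u : E3, ENNReal.ofReal
        (‖v - u‖ ^ (κ - 2) * Real.exp (-c * ‖v - u‖ ^ 2) * |⟪u, n⟫| ^ (-a))) ≤ C := by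
  set s : ℝ := (1 - a) / 2 with hsdef
  have hs : 0 < s := by rw [hsdef]; linarith
  have hs2 : s < 2 := by rw [hsdef]; linarith
  have hsa : s + a < 1 := by rw [hsdef]; linarith
  set q : ℝ := 1 - s / 2 with hqdef
  have hq : 0 < q := by rw [hqdef]; linarith
  have hq1 : q + 0 < 1 := by rw [hqdef]; linarith
  obtain ⟨C0, hC0, h0⟩ := lemB hs ha.le hsa (half_pos hc)
  obtain ⟨C1, hC1, h1⟩ := lemB hq le_rfl hq1 (half_pos hc)
  set K : ℝ := 2 + 2 / c with hK
  have hK0 : 0 ≤ K := by rw [hK]; positivity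
  refine ⟨ENNReal.ofReal (K * (C0 * C1 * C1)), ENNReal.ofReal_lt_top, fun v => ?_⟩
  -- Step 1: reduce to the case n = e0 via a reflection
  set e0 : E3 := EuclideanSpace.single 0 1 with he0
  set f : E3 ≃ₗᵢ[ℝ] E3 := Submodule.reflection (ℝ ∙ (e0 - n))ᗮ with hf
  have hfe0 : f e0 = n := Submodule.reflection_sub (by simp [he0, EuclideanSpace.norm_single, hn])
  have step1 : (∫⁻ u : E3, ENNReal.ofReal
        (‖v - u‖ ^ (κ - 2) * Real.exp (-c * ‖v - u‖ ^ 2) * |⟪u, n⟫| ^ (-a)))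
      = ∫⁻ u : E3, ENNReal.ofReal
        (‖f.symm v - u‖ ^ (κ - 2) * Real.exp (-c * ‖f.symm v - u‖ ^ 2) * |⟪u, e0⟫| ^ (-a)) := by
    rw [← f.measurePreserving.lintegral_comp_emb f.toHomeomorph.measurableEmbedding]
    apply lintegral_congr; intro u
    have hnorm : ‖v - f u‖ = ‖f.symm v - u‖ := by
      rw [← f.norm_map (f.symm v - u), map_sub, f.apply_symm_apply]
    have hip : ⟪f u, n⟫ = ⟪u, e0⟫ := by rw [← hfe0, f.inner_map_map]
    rw [hnorm, hip]
  rw [step1]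
  set w : E3 := f.symm v with hw
  clear_value w
  -- Step 2: transport to the product measure on `Fin 3 → ℝ`
  set eqv := (MeasurableEquiv.toLp 2 (Fin 3 → ℝ)).symm with heqv
  have step2 : (∫⁻ u : E3, ENNReal.ofReal
        (‖w - u‖ ^ (κ - 2) * Real.exp (-c * ‖w - u‖ ^ 2) * |⟪u, e0⟫| ^ (-a)))
      = ∫⁻ x : Fin 3 → ℝ, ENNReal.ofReal
        (‖w - eqv.symm x‖ ^ (κ - 2) * Real.exp (-c * ‖w - eqv.symm x‖ ^ 2) * |x 0| ^ (-a)) := by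
    rw [← ((EuclideanSpace.volume_preserving_symm_measurableEquiv_toLp (Fin 3)).symm
      (MeasurableEquiv.toLp 2 (Fin 3 → ℝ)).symm).lintegral_comp_emb
      (MeasurableEquiv.measurableEmbedding _)]
    apply lintegral_congr; intro x
    have : ⟪eqv.symm x, e0⟫ = x 0 := by
      simp only [he0, EuclideanSpace.inner_single_right, one_mul]
      rfl
    rw [this]
  rw [step2]
  -- the per-coordinate functions
  set eps : Fin 3 → ℝ := ![s, q, q] with heps
  set al : Fin 3 → ℝ := ![a, 0, 0] with hal
  set G : Fin 3 → ℝ → ℝ := fun i t =>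
    |w i - t| ^ (-(eps i)) * Real.exp (-(c / 2) * (w i - t) ^ 2) * |t| ^ (-(al i)) with hG
  have hGint : ∀ i, Integrable (G i) := by
    intro i
    fin_cases i
    · simpa [hG, heps, hal] using (h0 (w 0)).1
    · simpa [hG, heps, hal] using (h1 (w 1)).1
    · simpa [hG, heps, hal] using (h1 (w 2)).1
  have hGnn : ∀ i t, 0 ≤ G i t := fun i t => by
    rw [hG]
    have : (0:ℝ) ≤ |w i - t| ^ (-(eps i)) := Real.rpow_nonneg (abs_nonneg _) _
    have : (0:ℝ) ≤ |t| ^ (-(al i)) := Real.rpow_nonneg (abs_nonneg _) _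
    positivity
  have hGbound : (∫ t, G 0 t) ≤ C0 ∧ (∫ t, G 1 t) ≤ C1 ∧ (∫ t, G 2 t) ≤ C1 := by
    refine ⟨?_, ?_, ?_⟩
    · simpa [hG, heps, hal] using (h0 (w 0)).2
    · simpa [hG, heps, hal] using (h1 (w 1)).2
    · simpa [hG, heps, hal] using (h1 (w 2)).2
  -- the dominating product function
  set B : (Fin 3 → ℝ) → ℝ := fun x => K * ∏ i, G i (x i) with hB
  have hBint : Integrable B := (Integrable.fintype_prod hGint).const_mul K
  have hBnn : ∀ x, 0 ≤ B x := fun x => by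
    rw [hB]
    exact mul_nonneg hK0 (Finset.prod_nonneg fun i _ => hGnn i (x i))
  -- almost-everywhere pointwise bound
  have hae : ∀ᵐ x : Fin 3 → ℝ,
      ENNReal.ofReal (‖w - eqv.symm x‖ ^ (κ - 2) * Real.exp (-c * ‖w - eqv.symm x‖ ^ 2)
        * |x 0| ^ (-a)) ≤ ENNReal.ofReal (B x) := by
    have hne : ∀ i : Fin 3, ∀ᵐ x : Fin 3 → ℝ, x i ≠ w i := by
      intro i
      rw [ae_iff]
      simpa [not_not] using nullslab i (w i)
    filter_upwards [hne 0, hne 1, hne 2] with x hx0 hx1 hx2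
    apply ENNReal.ofReal_le_ofReal
    have hcoord : ∀ i, (w - eqv.symm x) i = w i - x i := fun i => rfl
    have hr : ‖w - eqv.symm x‖ ^ 2 = (w 0 - x 0) ^ 2 + (w 1 - x 1) ^ 2 + (w 2 - x 2) ^ 2 := by
      rw [EuclideanSpace.norm_eq, Real.sq_sqrt (by positivity)]
      simp [Fin.sum_univ_three, hcoord, sq_abs]
    have hpt := pointwise3 hκ0 hκ1 hc hs hs2 (norm_nonneg _) hr
      (sub_ne_zero.mpr (Ne.symm hx0)) (sub_ne_zero.mpr (Ne.symm hx1))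
      (sub_ne_zero.mpr (Ne.symm hx2))
    have hma : (0:ℝ) ≤ |x 0| ^ (-a) := Real.rpow_nonneg (abs_nonneg _) _
    calc ‖w - eqv.symm x‖ ^ (κ - 2) * Real.exp (-c * ‖w - eqv.symm x‖ ^ 2) * |x 0| ^ (-a)
        ≤ ((2 + 2 / c) * ((|w 0 - x 0| ^ (-s) * Real.exp (-(c / 2) * (w 0 - x 0) ^ 2)) *
            ((|w 1 - x 1| ^ (-(1 - s / 2)) * Real.exp (-(c / 2) * (w 1 - x 1) ^ 2)) *
             (|w 2 - x 2| ^ (-(1 - s / 2)) * Real.exp (-(c / 2) * (w 2 - x 2) ^ 2)))))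
          * |x 0| ^ (-a) := mul_le_mul_of_nonneg_right hpt hma
      _ = B x := by
          show _ = K * ∏ i, G i (x i)
          rw [Fin.prod_univ_three]
          simp only [hG, hK, heps, hal, hqdef, Matrix.cons_val_zero, Matrix.cons_val_one,
            Matrix.head_cons, Matrix.cons_val_two, Matrix.tail_cons, neg_zero, Real.rpow_zero,
            mul_one]
          ring
  calc (∫⁻ x : Fin 3 → ℝ, ENNReal.ofReal
        (‖w - eqv.symm x‖ ^ (κ - 2) * Real.exp (-c * ‖w - eqv.symm x‖ ^ 2) * |x 0| ^ (-a)))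
      ≤ ∫⁻ x, ENNReal.ofReal (B x) := lintegral_mono_ae hae
    _ = ENNReal.ofReal (∫ x, B x) :=
        (ofReal_integral_eq_lintegral_ofReal hBint (ae_of_all _ hBnn)).symm
    _ ≤ ENNReal.ofReal (K * (C0 * C1 * C1)) := by
        apply ENNReal.ofReal_le_ofReal
        have hBeq : ∫ x, B x = K * ((∫ t, G 0 t) * (∫ t, G 1 t) * (∫ t, G 2 t)) := by
          calc ∫ x, B x = ∫ x : Fin 3 → ℝ, K * ∏ i, G i (x i) := rfl
            _ = K * ∫ x : Fin 3 → ℝ, ∏ i, G i (x i) := integral_const_mul K _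
            _ = K * ∏ i, ∫ t, G i t := by rw [integral_fintype_prod_volume_eq_prod]
            _ = K * ((∫ t, G 0 t) * (∫ t, G 1 t) * (∫ t, G 2 t)) := by
                rw [Fin.prod_univ_three]
        rw [hBeq]
        apply mul_le_mul_of_nonneg_left _ hK0
        have i1 : 0 ≤ ∫ t, G 1 t := integral_nonneg (hGnn 1)
        have i2 : 0 ≤ ∫ t, G 2 t := integral_nonneg (hGnn 2)
        obtain ⟨b0, b1, b2⟩ := hGbound
        apply mul_le_mul (mul_le_mul b0 b1 i1 hC0) b2 i2
        positivity
    -- done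

/-- **Velocity integral with a grazing singularity.**
For a unit vector `n`, `0 ≤ κ ≤ 1`, `c > 0`, `0 < a < 1`:
`sup_v ∫_{ℝ³} |v−u|^{κ−2} e^{−c|v−u|²} |u·n|^{−a} du < ∞`.
In particular, for `1 < p < ∞` and `0 < β < (p−1)/p`, the integral
`∫ e^{−c|v−u|²} |v−u|^{κ−2} |u·n|^{−βp/(p−1)} du` is finite uniformly in `v`. -/
theorem velocity_integral_grazing_singularity
    (n : E3) (hn : ‖n‖ = 1)
    (κ : ℝ) (hκ0 : 0 ≤ κ) (hκ1 : κ ≤ 1)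
    (c : ℝ) (hc : 0 < c) :
    (∀ a : ℝ, 0 < a → a < 1 →
      ∃ C : ℝ≥0∞, C < ⊤ ∧ ∀ v : E3,
        (∫⁻ u : E3, ENNReal.ofReal
          (‖v - u‖ ^ (κ - 2) * Real.exp (-c * ‖v - u‖ ^ 2) * |⟪u, n⟫| ^ (-a))) ≤ C) ∧
    (∀ p : ℝ, 1 < p → ∀ β : ℝ, 0 < β → β < (p - 1) / p →
      ∃ C : ℝ≥0∞, C < ⊤ ∧ ∀ v : E3,
        (∫⁻ u : E3, ENNReal.ofReal
          (Real.exp (-c * ‖v - u‖ ^ 2) * ‖v - u‖ ^ (κ - 2)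
            * |⟪u, n⟫| ^ (-(β * p / (p - 1))))) ≤ C) := by
  constructor
  · intro a ha ha1
    exact keyLemma κ c hκ0 hκ1 hc n hn a ha ha1
  · intro p hp β hβ hβ2
    have hp0 : (0:ℝ) < p := by linarith
    have hp1 : (0:ℝ) < p - 1 := by linarith
    have ha : 0 < β * p / (p - 1) := by positivity
    have ha1 : β * p / (p - 1) < 1 := by
      rw [div_lt_one hp1]
      have := (lt_div_iff₀ hp0).mp hβ2
      linarith
    obtain ⟨C, hC, hCv⟩ := keyLemma κ c hκ0 hκ1 hc n hn _ ha ha1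
    refine ⟨C, hC, fun v => ?_⟩
    calc (∫⁻ u : E3, ENNReal.ofReal
          (Real.exp (-c * ‖v - u‖ ^ 2) * ‖v - u‖ ^ (κ - 2) * |⟪u, n⟫| ^ (-(β * p / (p - 1)))))
        = ∫⁻ u : E3, ENNReal.ofReal
          (‖v - u‖ ^ (κ - 2) * Real.exp (-c * ‖v - u‖ ^ 2)
            * |⟪u, n⟫| ^ (-(β * p / (p - 1)))) := by
          apply lintegral_congr; intro u
          rw [mul_comm (Real.exp (-c * ‖v - u‖ ^ 2)) (‖v - u‖ ^ (κ - 2))]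
      _ ≤ C := hCv v

end
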